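/- For every positive integer m and every integer n ≥ 0, the coefficient c(n) of q^n in the power series expansion of ∏_{k≥1} (1-q^k)^m / (1-q^{2k})^m satisfies c(2n) > 0 and c(2n+1) < 0, except for the single case m = 1, n = 1, where c(2) = 0. -/

import Mathlib

open PowerSeries

/-- `(q^r; q^a)_∞ = ∏_{k≥0} (1 - q^{r+ak})` as a formal power series (defined
coefficientwise via truncated products; for `r ≥ 1` factors of index `> n` do not
affect the coefficient of `q^n`). -/
noncomputable def qpoch (r a : ℕ) : PowerSeries ℝ :=
  PowerSeries.mk fun n =>
    PowerSeries.coeff n (∏ k ∈ Finset.range (n + 1), (1 - PowerSeries.X ^ (r + a * k)))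

/-- `(q^a; q^a)_∞ = ∏_{k≥1} (1 - q^{ak})`. -/
noncomputable def E (a : ℕ) : PowerSeries ℝ := qpoch a a

/-- `c_t^{(m)}(n)`: the coefficient of `q^n` in `(q;q)_∞^m / (q^t;q^t)_∞^m`. -/
noncomputable def borweinC (t m n : ℕ) : ℝ :=
  PowerSeries.coeff n ((E 1) ^ m * ((E t) ^ m)⁻¹)

namespace BWaux

open Finset

/-- If `B ≡ 1 mod X^(n+1)` then `B` doesn't affect the coefficient of `X^n`. -/
lemma coeff_mul_of_dvd {n : ℕ} {A B : PowerSeries ℝ}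
    (h : (X : PowerSeries ℝ) ^ (n + 1) ∣ B - 1) :
    PowerSeries.coeff n (A * B) = PowerSeries.coeff n A := by
  have hAB : A * B = A * (B - 1) + A := by ring
  have h2 : (X : PowerSeries ℝ) ^ (n + 1) ∣ A * (B - 1) := h.mul_left A
  have h3 := (PowerSeries.X_pow_dvd_iff.mp h2) n (by omega)
  rw [hAB, map_add, h3, zero_add]

lemma dvd_prod_sub_one {ι : Type*} (s : Finset ι) (f : ι → PowerSeries ℝ) (n : ℕ)
    (h : ∀ i ∈ s, (X : PowerSeries ℝ) ^ (n + 1) ∣ f i - 1) :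
    (X : PowerSeries ℝ) ^ (n + 1) ∣ (∏ i ∈ s, f i) - 1 := by
  classical
  induction s using Finset.induction with
  | empty => simp
  | insert a s' hx ih =>
    rw [Finset.prod_insert hx]
    have h1 := h a (mem_insert_self a s')
    have h2 := ih fun i hi => h i (mem_insert_of_mem hi)
    have key : f a * ∏ i ∈ s', f i - 1 = f a * ((∏ i ∈ s', f i) - 1) + (f a - 1) := by ring
    rw [key]
    exact dvd_add (h2.mul_left _) h1

/-- stabilization of truncated products -/
lemma stab (r a i N N' : ℕ) (hr : 1 ≤ r) (ha : 1 ≤ a) (h : i + 1 ≤ N) (h' : N ≤ N') :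
    PowerSeries.coeff i (∏ k ∈ range N', (1 - X ^ (r + a * k) : PowerSeries ℝ)) =
    PowerSeries.coeff i (∏ k ∈ range N, (1 - X ^ (r + a * k) : PowerSeries ℝ)) := by
  have hsplit : (∏ k ∈ Finset.Ico 0 N, (1 - X ^ (r + a * k) : PowerSeries ℝ)) *
      ∏ k ∈ Finset.Ico N N', (1 - X ^ (r + a * k) : PowerSeries ℝ) =
      ∏ k ∈ Finset.Ico 0 N', (1 - X ^ (r + a * k) : PowerSeries ℝ) :=
    Finset.prod_Ico_consecutive _ (Nat.zero_le N) h'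
  rw [Finset.range_eq_Ico, Finset.range_eq_Ico, ← hsplit]
  apply coeff_mul_of_dvd
  apply dvd_prod_sub_one
  intro k hk
  rw [Finset.mem_Ico] at hk
  have : (1 - X ^ (r + a * k) : PowerSeries ℝ) - 1 = -(X ^ (r + a * k)) := by ring
  rw [this]
  exact dvd_neg.mpr (pow_dvd_pow X (by nlinarith [hk.1]))

lemma coeff_qpoch (r a i N : ℕ) (hr : 1 ≤ r) (ha : 1 ≤ a) (h : i + 1 ≤ N) :
    PowerSeries.coeff i (qpoch r a) =
    PowerSeries.coeff i (∏ k ∈ range N, (1 - X ^ (r + a * k) : PowerSeries ℝ)) := by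
  rw [qpoch, PowerSeries.coeff_mk]
  exact (stab r a i (i + 1) N hr ha le_rfl h).symm

lemma coeff_mul_congr (n : ℕ) {A A' B B' : PowerSeries ℝ}
    (hA : ∀ i ≤ n, PowerSeries.coeff i A = PowerSeries.coeff i A')
    (hB : ∀ i ≤ n, PowerSeries.coeff i B = PowerSeries.coeff i B') :
    PowerSeries.coeff n (A * B) = PowerSeries.coeff n (A' * B') := by
  rw [PowerSeries.coeff_mul, PowerSeries.coeff_mul]
  apply Finset.sum_congr rfl
  intro x hx
  rw [Finset.HasAntidiagonal.mem_antidiagonal] at hx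
  rw [hA x.1 (by omega), hB x.2 (by omega)]

lemma prod_range_two_mul {M : Type*} [CommMonoid M] (N : ℕ) (f : ℕ → M) :
    ∏ j ∈ range (2 * N), f j = ∏ k ∈ range N, (f (2 * k) * f (2 * k + 1)) := by
  induction N with
  | zero => simp
  | succ N ih =>
    rw [prod_range_succ, ← ih, show 2 * (N + 1) = (2 * N + 1) + 1 by ring,
      prod_range_succ, prod_range_succ, mul_assoc]

lemma E1_eq : E 1 = qpoch 1 2 * E 2 := by
  ext n
  have hA : ∀ i ≤ n, PowerSeries.coeff i (qpoch 1 2) =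
      PowerSeries.coeff i (∏ k ∈ range (n + 1), (1 - X ^ (1 + 2 * k) : PowerSeries ℝ)) :=
    fun i hi => coeff_qpoch 1 2 i (n + 1) le_rfl (by norm_num) (by omega)
  have hB : ∀ i ≤ n, PowerSeries.coeff i (E 2) =
      PowerSeries.coeff i (∏ k ∈ range (n + 1), (1 - X ^ (2 + 2 * k) : PowerSeries ℝ)) :=
    fun i hi => coeff_qpoch 2 2 i (n + 1) (by norm_num) (by norm_num) (by omega)
  have h1 : PowerSeries.coeff n (qpoch 1 2 * E 2) =
      PowerSeries.coeff n
        ((∏ k ∈ range (n + 1), (1 - X ^ (1 + 2 * k) : PowerSeries ℝ)) *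
         ∏ k ∈ range (n + 1), (1 - X ^ (2 + 2 * k) : PowerSeries ℝ)) :=
    coeff_mul_congr n hA hB
  have h2 : (∏ k ∈ range (n + 1), (1 - X ^ (1 + 2 * k) : PowerSeries ℝ)) *
      (∏ k ∈ range (n + 1), (1 - X ^ (2 + 2 * k) : PowerSeries ℝ)) =
      ∏ j ∈ range (2 * (n + 1)), (1 - X ^ (1 + 1 * j) : PowerSeries ℝ) := by
    rw [prod_range_two_mul, ← Finset.prod_mul_distrib]
    refine Finset.prod_congr rfl fun k _ => ?_
    congr 2 <;> ring
  rw [h1, h2, stab 1 1 n (n + 1) (2 * (n + 1)) le_rfl le_rfl le_rfl (by omega),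
    E, ← coeff_qpoch 1 1 n (n + 1) le_rfl le_rfl le_rfl]

lemma constCoeff_E2 : PowerSeries.constantCoeff (E 2) = 1 := by
  rw [← PowerSeries.coeff_zero_eq_constantCoeff_apply, E,
    coeff_qpoch 2 2 0 1 (by norm_num) (by norm_num) le_rfl]
  simp

lemma borwein_eq (m n : ℕ) :
    borweinC 2 m n = PowerSeries.coeff n ((qpoch 1 2) ^ m) := by
  unfold borweinC
  rw [E1_eq, mul_pow, mul_assoc, PowerSeries.mul_inv_cancel, mul_one]
  rw [map_pow, constCoeff_E2, one_pow]
  norm_num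

noncomputable def Hs : PowerSeries ℝ := rescale (-1 : ℝ) (qpoch 1 2)

lemma coeff_pow_G (m n : ℕ) :
    PowerSeries.coeff n ((qpoch 1 2) ^ m) = (-1 : ℝ) ^ n * PowerSeries.coeff n (Hs ^ m) := by
  have h : Hs ^ m = rescale (-1 : ℝ) ((qpoch 1 2) ^ m) := (map_pow _ _ _).symm
  rw [h, PowerSeries.coeff_rescale, ← mul_assoc, ← pow_add]
  rw [Even.neg_one_pow ⟨n, by ring⟩, one_mul]

lemma coeff_Hs (i N : ℕ) (h : i + 1 ≤ N) :
    PowerSeries.coeff i Hs =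
    PowerSeries.coeff i (∏ k ∈ range N, (1 + X ^ (1 + 2 * k) : PowerSeries ℝ)) := by
  have hre : (∏ k ∈ range N, (1 + X ^ (1 + 2 * k) : PowerSeries ℝ)) =
      rescale (-1 : ℝ) (∏ k ∈ range N, (1 - X ^ (1 + 2 * k) : PowerSeries ℝ)) := by
    rw [map_prod]
    refine Finset.prod_congr rfl fun k _ => ?_
    rw [map_sub, map_one, map_pow, rescale_neg_one_X,
      Odd.neg_pow ⟨k, by ring⟩, sub_neg_eq_add]
  rw [Hs, PowerSeries.coeff_rescale, coeff_qpoch 1 2 i N le_rfl (by norm_num) h,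
    hre, PowerSeries.coeff_rescale]

lemma coeff_prod_one_add (N n : ℕ) :
    PowerSeries.coeff n (∏ k ∈ range N, (1 + X ^ (1 + 2 * k) : PowerSeries ℝ)) =
    ∑ t ∈ (range N).powerset,
      (if (∑ i ∈ range N \ t, (1 + 2 * i)) = n then (1 : ℝ) else 0) := by
  rw [Finset.prod_add, map_sum]
  refine Finset.sum_congr rfl fun t ht => ?_
  rw [Finset.prod_const_one, one_mul, Finset.prod_pow_eq_pow_sum,
    PowerSeries.coeff_X_pow]
  simp [eq_comm]

lemma coeff_Hs_nonneg (i : ℕ) : 0 ≤ PowerSeries.coeff i Hs := by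
  rw [coeff_Hs i (i + 1) le_rfl, coeff_prod_one_add]
  exact Finset.sum_nonneg fun t ht => by positivity

lemma exists_subset (n : ℕ) (hn : n ≠ 2) :
    ∃ u ⊆ range (n + 1), ∑ i ∈ u, (1 + 2 * i) = n := by
  rcases Nat.even_or_odd n with ⟨c, hc⟩ | ⟨c, hc⟩
  · rcases Nat.eq_zero_or_pos c with rfl | hc0
    · exact ⟨∅, by simp, by simp [hc]⟩
    · have hc1 : 1 ≤ c - 1 := by omega
      refine ⟨{0, c - 1}, ?_, ?_⟩
      · intro x hx
        simp only [Finset.mem_insert, Finset.mem_singleton] at hx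
        rcases hx with rfl | rfl <;> simp [Finset.mem_range] <;> omega
      · rw [Finset.sum_pair (by omega : (0 : ℕ) ≠ c - 1)]
        omega
  · refine ⟨{c}, ?_, ?_⟩
    · intro x hx
      simp only [Finset.mem_singleton] at hx
      subst hx
      simp [Finset.mem_range]; omega
    · simp [Finset.sum_singleton]; omega

lemma coeff_Hs_pos (n : ℕ) (hn : n ≠ 2) : 0 < PowerSeries.coeff n Hs := by
  rw [coeff_Hs n (n + 1) le_rfl, coeff_prod_one_add]
  obtain ⟨u, hu, hsum⟩ := exists_subset n hn
  have hmem : range (n + 1) \ u ∈ (range (n + 1)).powerset :=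
    Finset.mem_powerset.mpr (Finset.sdiff_subset)
  have hkey : range (n + 1) \ (range (n + 1) \ u) = u := by
    rw [Finset.sdiff_sdiff_self_left]
    exact Finset.inter_eq_right.mpr hu
  have hterm : (if (∑ i ∈ range (n + 1) \ (range (n + 1) \ u), (1 + 2 * i)) = n
      then (1 : ℝ) else 0) = 1 := by
    rw [hkey, if_pos hsum]
  have hle := Finset.single_le_sum (f := fun t =>
      (if (∑ i ∈ range (n + 1) \ t, (1 + 2 * i)) = n then (1 : ℝ) else 0))
      (fun t _ => by positivity) hmem
  rw [hterm] at hle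
  linarith

lemma coeff_Hs_two : PowerSeries.coeff 2 Hs = 0 := by
  rw [coeff_Hs 2 3 le_rfl, coeff_prod_one_add]
  apply Finset.sum_eq_zero
  intro t ht
  rw [if_neg]
  have hmem : range 3 \ t ∈ (range 3).powerset :=
    Finset.mem_powerset.mpr (Finset.sdiff_subset)
  have : ∀ u ∈ (range 3).powerset, ¬ (∑ i ∈ u, (1 + 2 * i)) = 2 := by decide
  exact this _ hmem

lemma constCoeff_Hs_pow (m : ℕ) : PowerSeries.coeff 0 (Hs ^ m) = 1 := by
  have h0 : PowerSeries.constantCoeff Hs = 1 := by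
    rw [← PowerSeries.coeff_zero_eq_constantCoeff_apply, coeff_Hs 0 1 le_rfl]
    simp
  rw [PowerSeries.coeff_zero_eq_constantCoeff_apply, map_pow, h0, one_pow]

lemma coeff_Hs_pow_nonneg (m : ℕ) : ∀ i, 0 ≤ PowerSeries.coeff i (Hs ^ m) := by
  induction m with
  | zero =>
    intro i
    rw [pow_zero]
    rcases Nat.eq_zero_or_pos i with rfl | hi
    · simp
    · rw [PowerSeries.coeff_one, if_neg (by omega)]
  | succ m ih =>
    intro i
    rw [pow_succ, PowerSeries.coeff_mul]
    exact Finset.sum_nonneg fun p _ => mul_nonneg (ih p.1) (coeff_Hs_nonneg p.2)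

lemma coeff_mul_ge {f g : PowerSeries ℝ} (hf : ∀ i, 0 ≤ PowerSeries.coeff i f)
    (hg : ∀ i, 0 ≤ PowerSeries.coeff i g) (a b : ℕ) :
    PowerSeries.coeff a f * PowerSeries.coeff b g ≤ PowerSeries.coeff (a + b) (f * g) := by
  rw [PowerSeries.coeff_mul]
  exact Finset.single_le_sum
    (f := fun p : ℕ × ℕ => PowerSeries.coeff p.1 f * PowerSeries.coeff p.2 g)
    (fun p _ => mul_nonneg (hf p.1) (hg p.2))
    (show ((a, b) : ℕ × ℕ) ∈ Finset.HasAntidiagonal.antidiagonal (a + b) from Finset.HasAntidiagonal.mem_antidiagonal.mpr rfl)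

lemma coeff_Hs_pow_pos (m : ℕ) (hm : 0 < m) (n : ℕ) (hn : n ≠ 2) :
    0 < PowerSeries.coeff n (Hs ^ m) := by
  induction m with
  | zero => omega
  | succ m ih =>
    rcases Nat.eq_zero_or_pos m with rfl | hm'
    · simpa using coeff_Hs_pos n hn
    · have h1 := coeff_mul_ge (coeff_Hs_pow_nonneg m) coeff_Hs_nonneg n 0
      rw [Nat.add_zero, ← pow_succ] at h1
      calc (0:ℝ) < PowerSeries.coeff n (Hs ^ m) * PowerSeries.coeff 0 Hs :=
            mul_pos (ih hm') (coeff_Hs_pos 0 (by omega))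
        _ ≤ _ := h1

lemma coeff_two_Hs_pow_pos (m : ℕ) (hm : 2 ≤ m) :
    0 < PowerSeries.coeff 2 (Hs ^ m) := by
  obtain ⟨m', rfl⟩ : ∃ m', m = m' + 2 := ⟨m - 2, by omega⟩
  have h1 : PowerSeries.coeff 1 (Hs ^ (m' + 1)) *
      PowerSeries.coeff 1 Hs ≤ PowerSeries.coeff 2 (Hs ^ (m' + 2)) := by
    have := coeff_mul_ge (coeff_Hs_pow_nonneg (m' + 1)) coeff_Hs_nonneg 1 1
    rwa [← pow_succ] at this
  have h2 : 0 < PowerSeries.coeff 1 (Hs ^ (m' + 1)) :=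
    coeff_Hs_pow_pos (m' + 1) (by omega) 1 (by omega)
  have h3 : 0 < PowerSeries.coeff 1 Hs := coeff_Hs_pos 1 (by omega)
  calc (0:ℝ) < _ := mul_pos h2 h3
    _ ≤ _ := h1

lemma borwein_Hs (m n : ℕ) :
    borweinC 2 m n = (-1 : ℝ) ^ n * PowerSeries.coeff n (Hs ^ m) := by
  rw [borwein_eq, coeff_pow_G]

end BWaux

theorem stmt0 (m : ℕ) (hm : 0 < m) (n : ℕ) :
    ((m = 1 ∧ n = 1) → borweinC 2 m (2 * n) = 0) ∧
    (¬(m = 1 ∧ n = 1) → 0 < borweinC 2 m (2 * n)) ∧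
    borweinC 2 m (2 * n + 1) < 0 := by
  open BWaux in
  refine ⟨?_, ?_, ?_⟩
  · rintro ⟨rfl, rfl⟩
    rw [BWaux.borwein_Hs]
    simp [pow_one, BWaux.coeff_Hs_two]
  · intro hne
    rw [BWaux.borwein_Hs, Even.neg_one_pow ⟨n, by ring⟩, one_mul]
    rcases eq_or_ne n 1 with rfl | hn1
    · have hm2 : 2 ≤ m := by
        rcases Nat.lt_or_ge m 2 with h | h
        · exact absurd ⟨by omega, rfl⟩ hne
        · exact h
      simpa using BWaux.coeff_two_Hs_pow_pos m hm2
    · exact BWaux.coeff_Hs_pow_pos m hm (2 * n) (by omega)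
  · rw [BWaux.borwein_Hs, pow_succ, Even.neg_one_pow ⟨n, by ring⟩, one_mul]
    have := BWaux.coeff_Hs_pow_pos m hm (2 * n + 1) (by omega)
    nlinarith
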